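/- For the map f*(x_1,x_2,x_3) = (x_2 ⊕ x_3, x_1 ⊕ ¬x_3, ¬x_3), the associated Markov matrix (with entries 1/3 on off-diagonal arcs of Γ(f*) and diagonal entries making row sums 1) is doubly stochastic. -/

import Mathlib

open scoped Classical BigOperators

/-- The map f*(x_1, x_2, x_3) = (x_2 ⊕ x_3, x_1 ⊕ ¬x_3, ¬x_3) on {0,1}^3. -/
def fstar : (Fin 3 → Bool) → (Fin 3 → Bool) := fun x =>
  ![xor (x 1) (x 2), xor (x 0) (!(x 2)), !(x 2)]


lemma card_out_le (x : Fin 3 → Bool) :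
    ((Finset.univ.erase x).filter
      (fun y => ∃ i : Fin 3, y = Function.update x i (fstar x i))).card ≤ 3 := by
  revert x; decide

lemma card_out_eq_in (y : Fin 3 → Bool) :
    ((Finset.univ.erase y).filter
      (fun z => ∃ i : Fin 3, z = Function.update y i (fstar y i))).card =
    ((Finset.univ.erase y).filter
      (fun x => ∃ i : Fin 3, y = Function.update x i (fstar x i))).card := by
  revert y; decide

/-- the Markov matrix associated to the iteration graph Γ(f*)
(off-diagonal entries 1/3 on arcs, diagonal completing row sums to 1) is doubly
stochastic. -/
theorem fstar_markov_doubly_stochastic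
    (M : (Fin 3 → Bool) → (Fin 3 → Bool) → ℝ)
    (hMoff : ∀ x y, x ≠ y →
      M x y = if (∃ i : Fin 3, y = Function.update x i (fstar x i))
        then (1 : ℝ) / 3 else 0)
    (hMdiag : ∀ x, M x x = 1 - ∑ y ∈ Finset.univ.erase x, M x y) :
    (∀ x y, 0 ≤ M x y) ∧ (∀ x, ∑ y, M x y = 1) ∧ (∀ y, ∑ x, M x y = 1) := by
  have hsum : ∀ x, ∑ y ∈ Finset.univ.erase x, M x y =
      (((Finset.univ.erase x).filter
        (fun y => ∃ i : Fin 3, y = Function.update x i (fstar x i))).card : ℝ) * (1/3) := by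
    intro x
    rw [Finset.sum_congr rfl (fun y hy => hMoff x y (Ne.symm (Finset.ne_of_mem_erase hy)))]
    rw [Finset.sum_ite, Finset.sum_const_zero, add_zero, Finset.sum_const, nsmul_eq_mul]
  have hsumin : ∀ y, ∑ x ∈ Finset.univ.erase y, M x y =
      (((Finset.univ.erase y).filter
        (fun x => ∃ i : Fin 3, y = Function.update x i (fstar x i))).card : ℝ) * (1/3) := by
    intro y
    rw [Finset.sum_congr rfl (fun x hx => hMoff x y (Finset.ne_of_mem_erase hx))]
    rw [Finset.sum_ite, Finset.sum_const_zero, add_zero, Finset.sum_const, nsmul_eq_mul]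
  have hrow : ∀ x, ∑ y, M x y = 1 := by
    intro x
    rw [← Finset.add_sum_erase _ _ (Finset.mem_univ x), hMdiag x]
    ring
  refine ⟨?_, hrow, ?_⟩
  · intro x y
    rcases eq_or_ne x y with rfl | h
    · rw [hMdiag x, hsum x]
      have := card_out_le x
      have h3 : (((Finset.univ.erase x).filter
        (fun y => ∃ i : Fin 3, y = Function.update x i (fstar x i))).card : ℝ) ≤ 3 := by
        exact_mod_cast this
      linarith
    · rw [hMoff x y h]
      split <;> norm_num
  · intro y
    rw [← Finset.add_sum_erase _ _ (Finset.mem_univ y), hMdiag y, hsum y, hsumin y,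
      card_out_eq_in y]
    ring
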